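/- Let 0 < ε < 1 and let (a_l)_{l≥0} be a sequence of nonnegative real numbers such that for every l ≥ 0 there exists γ_{l+1} ∈ [1/(1+ε), 1] with a_{l+1} = γ_{l+1} · a_l/(1 + a_l). Then for every l ≥ 1, a_l ≤ ε(1+ε)^{l−1}/((1+ε)^l − 1); in particular a_l < 2ε for all sufficiently large l. -/

import Mathlib

open scoped ComplexInnerProductSpace
open Finset Filter

/-- If `a_{l+1} = γ_{l+1} a_l / (1 + a_l)` with `γ_{l+1} ∈ [1/(1+ε), 1]`, then
`a_l ≤ ε (1+ε)^{l-1} / ((1+ε)^l - 1)`, so `a_l < 2ε` for all large `l`. -/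
theorem seq_gamma_recursion_bound (ε : ℝ) (hε0 : 0 < ε) (hε1 : ε < 1)
    (a : ℕ → ℝ) (ha : ∀ l, 0 ≤ a l)
    (hrec : ∀ l : ℕ, ∃ γ ∈ Set.Icc (1 / (1 + ε)) 1,
      a (l + 1) = γ * (a l / (1 + a l))) :
    (∀ l : ℕ, 1 ≤ l →
        a l ≤ ε * (1 + ε) ^ (l - 1) / ((1 + ε) ^ l - 1)) ∧
      ∀ᶠ l in atTop, a l < 2 * ε := by
  have hb : (1:ℝ) < 1 + ε := by linarith
  have hbpos : (0:ℝ) < 1 + ε := by linarith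
  have hpowpos : ∀ n : ℕ, (0:ℝ) < (1+ε)^n := fun n => pow_pos hbpos n
  have hpow1 : ∀ n : ℕ, (1:ℝ) ≤ (1+ε)^n := fun n => one_le_pow₀ hb.le
  have hden : ∀ n : ℕ, 1 ≤ n → (0:ℝ) < (1+ε)^n - 1 := by
    intro n hn
    have := one_lt_pow₀ hb (by omega : n ≠ 0)
    linarith
  have hstep : ∀ l : ℕ, a (l+1) ≤ a l / (1 + a l) := by
    intro l
    obtain ⟨γ, ⟨hγ1, hγ2⟩, heq⟩ := hrec l
    have h0 : 0 ≤ a l / (1 + a l) := div_nonneg (ha l) (by linarith [ha l])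
    calc a (l+1) = γ * (a l / (1 + a l)) := heq
      _ ≤ 1 * (a l / (1 + a l)) := by nlinarith
      _ = _ := one_mul _
  have main : ∀ l : ℕ, 1 ≤ l → a l ≤ ε * (1 + ε) ^ (l - 1) / ((1 + ε) ^ l - 1) := by
    intro l hl
    induction l, hl using Nat.le_induction with
    | base =>
      have h1 : a 1 ≤ 1 := by
        have h2 := hstep 0
        have h01 : a 0 / (1 + a 0) ≤ 1 := by
          rw [div_le_one (by linarith [ha 0])]; linarith [ha 0]
        linarith
      have heq : ε * (1 + ε) ^ (1 - 1) / ((1 + ε) ^ 1 - 1) = 1 := by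
        field_simp
        simp [hε0.ne']
      linarith [heq]
    | succ l hl ih =>
      have hAl := hstep l
      have hd : (0:ℝ) < (1+ε)^l - 1 := hden l hl
      have hd1 : (0:ℝ) < (1+ε)^(l+1) - 1 := hden (l+1) (by omega)
      have hsplit : (1+ε)^l = (1+ε)^(l-1) * (1+ε) := by
        rw [← pow_succ]; congr 1; omega
      have hsplit1 : (1+ε)^(l+1) = (1+ε)^l * (1+ε) := pow_succ _ _
      -- cross-multiplied IH
      have ih' : a l * ((1+ε)^l - 1) ≤ ε * (1+ε)^(l-1) := (le_div_iff₀ hd).mp ih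
      have key : a l / (1 + a l) ≤ ε * (1 + ε) ^ (l + 1 - 1) / ((1 + ε) ^ (l + 1) - 1) := by
        have h11 : l + 1 - 1 = l := rfl
        rw [h11, div_le_div_iff₀ (by linarith [ha l]) hd1]
        nlinarith [hpow1 l, ha l, mul_nonneg (ha l) (sub_nonneg.mpr (hpow1 l))]
      linarith
  refine ⟨main, ?_⟩
  obtain ⟨N, hN⟩ := pow_unbounded_of_one_lt (2:ℝ) hb
  rw [eventually_atTop]
  refine ⟨N + 1, fun l hl => ?_⟩
  have h1 : 1 ≤ l := by omega
  have h2 : (2:ℝ) ≤ (1+ε)^(l-1) := by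
    calc (2:ℝ) ≤ (1+ε)^N := hN.le
    _ ≤ (1+ε)^(l-1) := pow_le_pow_right₀ hb.le (by omega)
  have hd : (0:ℝ) < (1+ε)^l - 1 := hden l h1
  have hbound := main l h1
  have hlt : ε * (1+ε)^(l-1) / ((1+ε)^l - 1) < 2*ε := by
    rw [div_lt_iff₀ hd]
    have hsplit : (1+ε)^l = (1+ε)^(l-1) * (1+ε) := by
      rw [← pow_succ]; congr 1; omega
    nlinarith [mul_le_mul_of_nonneg_left h2 hε0.le, mul_pos hε0 hε0]
  linarith
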